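/- In the braid group A[A_{n+1}], the images s_1'², s_2'², ..., s_{n+1}'² of the squares of the generators, together with all conjugates of these squares by generators, lie in the subgroup generated by s_1', ..., s_n', (s_{n+1}')². In particular, the kernel of the natural projection ω: A[A_{n+1}] → W[A_{n+1}] onto the symmetric group is contained in the subgroup generated by s_1', ..., s_n', (s_{n+1}')². -/

import Mathlib

open FreeGroup in
/-- Defining relations of the Artin group of type `A n` (the braid group on
`n+1` strands): generators indexed by `Fin n` (index `k` represents `s (k+1)`). -/
def ArtinARels (n : ℕ) : Set (FreeGroup (Fin n)) :=
  {w | ∃ i j : Fin n,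
    ((j : ℕ) = (i : ℕ) + 1 ∧ w = of i * of j * of i * (of j * of i * of j)⁻¹) ∨
    ((i : ℕ) + 1 < (j : ℕ) ∧ w = of i * of j * (of j * of i)⁻¹)}

/-- The Artin group of type `A n`. -/
def ArtinA (n : ℕ) : Type := PresentedGroup (ArtinARels n)

instance (n : ℕ) : Group (ArtinA n) :=
  inferInstanceAs (Group (PresentedGroup (ArtinARels n)))

/-- The standard generator `s i` (1-based, so `1 ≤ i ≤ n`) of `A[A n]`. -/
def sA (n : ℕ) (i : ℕ) : ArtinA n :=
  if h : i - 1 < n then PresentedGroup.of ⟨i - 1, h⟩ else 1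

/-- The Garside element `Δ = (s₁⋯sₙ)(s₁⋯s_{n-1})⋯(s₁s₂)s₁` of `A[A n]`. -/
def deltaA (n : ℕ) : ArtinA n :=
  ((List.range n).reverse.map
    (fun k => ((List.range (k + 1)).map (fun i => sA n (i + 1))).prod)).prod

/-- The subgroup of the braid group `A[A (n+1)]` generated by
`s₁', …, sₙ', (s_{n+1}')²`. -/
def genB (n : ℕ) : Subgroup (ArtinA (n + 1)) :=
  Subgroup.closure
    ({g | ∃ i : ℕ, 1 ≤ i ∧ i ≤ n ∧ g = sA (n + 1) i} ∪ {sA (n + 1) (n + 1) ^ 2})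


section Stmt6Aux

open Fin.NatCast

variable {n : ℕ}

private lemma rel_eq {x y : FreeGroup (Fin (n + 1))} (h : x * y⁻¹ ∈ ArtinARels (n + 1)) :
    PresentedGroup.mk (ArtinARels (n + 1)) x = PresentedGroup.mk (ArtinARels (n + 1)) y := by
  have h1 : PresentedGroup.mk (ArtinARels (n + 1)) (x * y⁻¹) = 1 :=
    (QuotientGroup.eq_one_iff _).mpr (Subgroup.subset_normalClosure h)
  rw [map_mul, map_inv] at h1
  exact mul_inv_eq_one.mp h1

private lemma of_braid (a b : Fin (n+1)) (h : (b : ℕ) = (a : ℕ) + 1) :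
    (PresentedGroup.of a * PresentedGroup.of b * PresentedGroup.of a : ArtinA (n+1))
      = PresentedGroup.of b * PresentedGroup.of a * PresentedGroup.of b := by
  have key := rel_eq (x := .of a * .of b * .of a) (y := .of b * .of a * .of b)
    ⟨a, b, Or.inl ⟨h, rfl⟩⟩
  simp only [map_mul] at key
  exact key

private lemma of_comm (a b : Fin (n+1)) (h : (a : ℕ) + 1 < (b : ℕ)) :
    (PresentedGroup.of a * PresentedGroup.of b : ArtinA (n+1))
      = PresentedGroup.of b * PresentedGroup.of a := by
  have key := rel_eq (x := .of a * .of b) (y := .of b * .of a)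
    ⟨a, b, Or.inr ⟨h, rfl⟩⟩
  simp only [map_mul] at key
  exact key

private lemma sA_eq (i : ℕ) (h2 : i ≤ n + 1) :
    sA (n + 1) i = PresentedGroup.of (rels := ArtinARels (n + 1)) ⟨i - 1, by omega⟩ := by
  rw [sA]
  exact dif_pos (by omega)

private lemma braid (i : ℕ) (h1 : 1 ≤ i) (h2 : i ≤ n) :
    sA (n+1) i * sA (n+1) (i+1) * sA (n+1) i
      = sA (n+1) (i+1) * sA (n+1) i * sA (n+1) (i+1) := by
  rw [sA_eq i (by omega), sA_eq (i+1) (by omega)]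
  exact of_braid ⟨i - 1, by omega⟩ ⟨i + 1 - 1, by omega⟩ (by show i + 1 - 1 = i - 1 + 1; omega)

private lemma farComm (i j : ℕ) (h1 : 1 ≤ i) (h2 : i + 2 ≤ j) (h3 : j ≤ n + 1) :
    sA (n+1) i * sA (n+1) j = sA (n+1) j * sA (n+1) i := by
  rw [sA_eq i (by omega), sA_eq j h3]
  exact of_comm ⟨i - 1, by omega⟩ ⟨j - 1, by omega⟩ (by show i - 1 + 1 < j - 1; omega)

private lemma conj_sq {G : Type*} [Group G] {a b : G} (h : a * b * a = b * a * b) :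
    b * a ^ 2 * b⁻¹ = a⁻¹ * b ^ 2 * a := by
  have key : a * b * (a * a) = b * b * a * b := by
    calc a * b * (a * a) = (a*b*a)*a := by group
    _ = (b*a*b)*a := by rw [h]
    _ = b*(a*b*a) := by group
    _ = b*(b*a*b) := by rw [h]
    _ = b * b * a * b := by group
  calc b * a ^ 2 * b⁻¹ = a⁻¹ * (a * b * (a * a)) * b⁻¹ := by simp only [pow_two]; group
  _ = a⁻¹ * (b * b * a * b) * b⁻¹ := by rw [key]
  _ = a⁻¹ * b ^ 2 * a := by simp only [pow_two]; group

private lemma s_mem (i : ℕ) (h1 : 1 ≤ i) (h2 : i ≤ n) : sA (n+1) i ∈ genB n :=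
  Subgroup.subset_closure (Set.mem_union_left _ ⟨i, h1, h2, rfl⟩)

private lemma sq_mem : sA (n+1) (n+1) ^ 2 ∈ genB n :=
  Subgroup.subset_closure (Set.mem_union_right _ rfl)

/-- The coset representative `t k = s_{n+1} s_n ⋯ s_{k+1}`. -/
private def t (n k : ℕ) : ArtinA (n+1) :=
  ((List.range (n + 1 - k)).map (fun m => sA (n+1) (n + 1 - m))).prod

private lemma t_top (k : ℕ) (hk : n + 1 ≤ k) : t n k = 1 := by
  rw [t, Nat.sub_eq_zero_of_le hk]
  simp

private lemma t_succ (k : ℕ) (hk : k ≤ n) : t n k = t n (k+1) * sA (n+1) (k+1) := by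
  have h1 : n + 1 - k = (n - k) + 1 := by omega
  rw [t, t, h1, List.range_succ, List.map_append, List.prod_append]
  have h3 : n + 1 - (k + 1) = n - k := by omega
  simp only [List.map_cons, List.map_nil, List.prod_cons, List.prod_nil, mul_one, h3]
  have h2 : n + 1 - (n - k) = k + 1 := by omega
  rw [h2]

private lemma t_comm (j : ℕ) (hj : 1 ≤ j) :
    ∀ d k, k + d = n + 1 → j + 1 ≤ k → sA (n+1) j * t n k = t n k * sA (n+1) j := by
  intro d
  induction d with
  | zero =>
    intro k hk _
    have hk' : k = n + 1 := by omega
    rw [hk', t_top (n := n) (n+1) le_rfl, one_mul, mul_one]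
  | succ d ih =>
    intro k hk hjk
    have hkn : k ≤ n := by omega
    rw [t_succ (n := n) k hkn, ← mul_assoc, ih (k+1) (by omega) (by omega), mul_assoc,
      farComm j (k+1) hj (by omega) (by omega), ← mul_assoc]

private lemma t_conj_sq : ∀ d k, k + d = n + 1 → 1 ≤ k →
    t n k * sA (n+1) k ^ 2 * (t n k)⁻¹ ∈ genB n := by
  intro d
  induction d with
  | zero =>
    intro k hk _
    have hk' : k = n + 1 := by omega
    rw [hk', t_top (n := n) (n+1) le_rfl, one_mul, inv_one, mul_one]
    exact sq_mem
  | succ d ih =>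
    intro k hk h1
    have hkn : k ≤ n := by omega
    have hc := conj_sq (braid k h1 hkn)
    have hco : Commute (sA (n+1) k) (t n (k+1)) := t_comm k h1 d (k+1) (by omega) (by omega)
    have key : t n k * sA (n+1) k ^ 2 * (t n k)⁻¹
        = (sA (n+1) k)⁻¹ * (t n (k+1) * sA (n+1) (k+1) ^ 2 * (t n (k+1))⁻¹) * sA (n+1) k := by
      rw [t_succ (n := n) k hkn]
      calc t n (k+1) * sA (n+1) (k+1) * sA (n+1) k ^ 2 * (t n (k+1) * sA (n+1) (k+1))⁻¹
          = t n (k+1) * (sA (n+1) (k+1) * sA (n+1) k ^ 2 * (sA (n+1) (k+1))⁻¹)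
            * (t n (k+1))⁻¹ := by simp only [pow_two]; group
      _ = t n (k+1) * ((sA (n+1) k)⁻¹ * sA (n+1) (k+1) ^ 2 * sA (n+1) k)
            * (t n (k+1))⁻¹ := by rw [hc]
      _ = (t n (k+1) * (sA (n+1) k)⁻¹) * sA (n+1) (k+1) ^ 2
            * (sA (n+1) k * (t n (k+1))⁻¹) := by simp only [pow_two]; group
      _ = ((sA (n+1) k)⁻¹ * t n (k+1)) * sA (n+1) (k+1) ^ 2
            * ((t n (k+1))⁻¹ * sA (n+1) k) := by rw [← hco.inv_left.eq, hco.inv_right.eq]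
      _ = (sA (n+1) k)⁻¹ * (t n (k+1) * sA (n+1) (k+1) ^ 2 * (t n (k+1))⁻¹)
            * sA (n+1) k := by simp only [pow_two]; group
    rw [key]
    exact Subgroup.mul_mem _
      (Subgroup.mul_mem _ (Subgroup.inv_mem _ (s_mem k h1 hkn)) (ih (k+1) (by omega) (by omega)))
      (s_mem k h1 hkn)

private lemma t_shift (m : ℕ) (h1 : 1 ≤ m) (h2 : m ≤ n) :
    ∀ d k, k + d + 1 = m → t n k * sA (n+1) (m+1) = sA (n+1) m * t n k := by
  intro d
  induction d with
  | zero =>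
    intro k hk
    have hk' : k = m - 1 := by omega
    subst hk'
    have e1 : t n (m-1) = t n m * sA (n+1) m := by
      have := t_succ (n := n) (m-1) (by omega)
      rwa [show m - 1 + 1 = m by omega] at this
    have e2 : t n m = t n (m+1) * sA (n+1) (m+1) := t_succ (n := n) m h2
    have hco : Commute (sA (n+1) m) (t n (m+1)) :=
      t_comm m h1 (n - m) (m+1) (by omega) (by omega)
    calc t n (m-1) * sA (n+1) (m+1)
        = t n (m+1) * (sA (n+1) (m+1) * sA (n+1) m * sA (n+1) (m+1)) := by
          rw [e1, e2]; group
    _ = t n (m+1) * (sA (n+1) m * sA (n+1) (m+1) * sA (n+1) m) := by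
          rw [← braid m h1 h2]
    _ = (t n (m+1) * sA (n+1) m) * (sA (n+1) (m+1) * sA (n+1) m) := by group
    _ = (sA (n+1) m * t n (m+1)) * (sA (n+1) (m+1) * sA (n+1) m) := by rw [← hco.eq]
    _ = sA (n+1) m * t n (m-1) := by rw [e1, e2]; group
  | succ d ih =>
    intro k hk
    have hkn : k ≤ n := by omega
    rw [t_succ (n := n) k hkn, mul_assoc, farComm (k+1) (m+1) (by omega) (by omega) (by omega),
      ← mul_assoc, ih (k+1) (by omega), mul_assoc]

private lemma coset_step (j k : ℕ) (hj1 : 1 ≤ j) (hj2 : j ≤ n+1) (hk : k ≤ n+1) :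
    (∃ k', k' ≤ n+1 ∧ t n k * sA (n+1) j * (t n k')⁻¹ ∈ genB n) ∧
    (∃ k', k' ≤ n+1 ∧ t n k * (sA (n+1) j)⁻¹ * (t n k')⁻¹ ∈ genB n) := by
  rcases lt_trichotomy j k with hA | hB | hCD
  · -- j + 1 ≤ k
    have hco : Commute (sA (n+1) j) (t n k) := t_comm j hj1 (n+1-k) k (by omega) (by omega)
    have e : ∀ y : ArtinA (n+1), Commute y (t n k) → t n k * y * (t n k)⁻¹ = y := by
      intro y hy
      rw [← hy.eq]; group
    constructor
    · exact ⟨k, hk, by rw [e _ hco]; exact s_mem j hj1 (by omega)⟩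
    · exact ⟨k, hk, by rw [e _ hco.inv_left]; exact Subgroup.inv_mem _ (s_mem j hj1 (by omega))⟩
  · -- j = k
    subst hB
    have e1 : t n (j-1) = t n j * sA (n+1) j := by
      have := t_succ (n := n) (j-1) (by omega)
      rwa [show j - 1 + 1 = j by omega] at this
    constructor
    · refine ⟨j - 1, by omega, ?_⟩
      rw [e1]
      have e2 : t n j * sA (n+1) j * (t n j * sA (n+1) j)⁻¹ = 1 := by group
      rw [e2]; exact Subgroup.one_mem _
    · refine ⟨j - 1, by omega, ?_⟩
      rw [e1]
      have e2 : t n j * (sA (n+1) j)⁻¹ * (t n j * sA (n+1) j)⁻¹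
          = (t n j * sA (n+1) j ^ 2 * (t n j)⁻¹)⁻¹ := by simp only [pow_two]; group
      rw [e2]
      exact Subgroup.inv_mem _ (t_conj_sq (n+1-j) j (by omega) hj1)
  · rcases Nat.lt_or_ge k (j - 1) with hD | hC
    · -- k + 2 ≤ j
      have hm1 : 1 ≤ j - 1 := by omega
      have hm2 : j - 1 ≤ n := by omega
      have e := t_shift (j-1) hm1 hm2 (j - 2 - k) k (by omega)
      rw [show j - 1 + 1 = j by omega] at e
      have e' : t n k * sA (n+1) j * (t n k)⁻¹ = sA (n+1) (j-1) := by rw [e]; group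
      constructor
      · exact ⟨k, hk, by rw [e']; exact s_mem (j-1) hm1 hm2⟩
      · refine ⟨k, hk, ?_⟩
        have e'' : t n k * (sA (n+1) j)⁻¹ * (t n k)⁻¹ = (sA (n+1) (j-1))⁻¹ := by
          rw [← e']; group
        rw [e'']; exact Subgroup.inv_mem _ (s_mem (j-1) hm1 hm2)
    · -- j = k + 1
      have hjk : j = k + 1 := by omega
      subst hjk
      have hkn : k ≤ n := by omega
      have e : t n k = t n (k+1) * sA (n+1) (k+1) := t_succ (n := n) k hkn
      constructor
      · refine ⟨k + 1, by omega, ?_⟩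
        have e2 : t n k * sA (n+1) (k+1) * (t n (k+1))⁻¹
            = t n (k+1) * sA (n+1) (k+1) ^ 2 * (t n (k+1))⁻¹ := by
          rw [e]; simp only [pow_two]; group
        rw [e2]
        exact t_conj_sq (n - k) (k+1) (by omega) (by omega)
      · refine ⟨k + 1, by omega, ?_⟩
        have e2 : t n k * (sA (n+1) (k+1))⁻¹ * (t n (k+1))⁻¹ = 1 := by rw [e]; group
        rw [e2]; exact Subgroup.one_mem _

private lemma fin_cast_ne {a b : ℕ} (ha : a < n+2) (hb : b < n+2) (h : a ≠ b) :
    ((a : ℕ) : Fin (n+2)) ≠ ((b : ℕ) : Fin (n+2)) := by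
  intro he
  apply h
  have hv := congrArg Fin.val he
  rwa [Fin.val_natCast, Fin.val_natCast, Nat.mod_eq_of_lt ha, Nat.mod_eq_of_lt hb] at hv

private lemma genB_fix (ω : ArtinA (n+1) →* Equiv.Perm (Fin (n+2)))
    (hω : ∀ i : ℕ, 1 ≤ i → i ≤ n + 1 →
      ω (sA (n + 1) i) = Equiv.swap ((i - 1 : ℕ) : Fin (n + 2)) ((i : ℕ) : Fin (n + 2)))
    {g : ArtinA (n+1)} (hg : g ∈ genB n) :
    ω g (((n+1 : ℕ)) : Fin (n+2)) = (((n+1 : ℕ)) : Fin (n+2)) := by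
  induction hg using Subgroup.closure_induction with
  | mem x hx =>
    rcases hx with ⟨i, h1, h2, rfl⟩ | hx
    · rw [hω i h1 (by omega)]
      exact Equiv.swap_apply_of_ne_of_ne
        (fin_cast_ne (by omega) (by omega) (by omega))
        (fin_cast_ne (by omega) (by omega) (by omega))
    · rw [Set.mem_singleton_iff.mp hx, map_pow, hω (n+1) (by omega) le_rfl,
        show (n + 1 - 1 : ℕ) = n by omega]
      rw [pow_two, Equiv.swap_mul_self]
      rfl
  | one => rw [map_one]; rfl
  | mul x y hx hy ihx ihy =>
    rw [map_mul, Equiv.Perm.mul_apply, ihy, ihx]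
  | inv x hx ih =>
    have h' : (ω x)⁻¹ (ω x (((n+1 : ℕ)) : Fin (n+2))) = (((n+1 : ℕ)) : Fin (n+2)) :=
      Equiv.symm_apply_apply _ _
    rw [ih] at h'
    rw [map_inv]
    exact h'

private lemma t_apply (ω : ArtinA (n+1) →* Equiv.Perm (Fin (n+2)))
    (hω : ∀ i : ℕ, 1 ≤ i → i ≤ n + 1 →
      ω (sA (n + 1) i) = Equiv.swap ((i - 1 : ℕ) : Fin (n + 2)) ((i : ℕ) : Fin (n + 2))) :
    ∀ d k, k + d = n + 1 → ω (t n k) ((k : ℕ) : Fin (n+2)) = (((n+1 : ℕ)) : Fin (n+2)) := by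
  intro d
  induction d with
  | zero =>
    intro k hk
    have hk' : k = n + 1 := by omega
    subst hk'
    rw [t_top (n := n) (n+1) le_rfl, map_one]
    rfl
  | succ d ih =>
    intro k hk
    have hkn : k ≤ n := by omega
    rw [t_succ (n := n) k hkn, map_mul, Equiv.Perm.mul_apply, hω (k+1) (by omega) (by omega),
      show (k + 1 - 1 : ℕ) = k by omega, Equiv.swap_apply_left]
    exact ih (k+1) (by omega)

end Stmt6Aux

open Fin.NatCast in
/-- The squares of the generators of `A[A (n+1)]`, and all their conjugates by
generators, lie in the subgroup generated by `s₁', …, sₙ', (s_{n+1}')²`;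
in particular the kernel of the natural projection onto the symmetric group is
contained in that subgroup. -/
theorem stmt6 (n : ℕ) :
    (∀ i : ℕ, 1 ≤ i → i ≤ n + 1 → sA (n + 1) i ^ 2 ∈ genB n) ∧
    (∀ i j : ℕ, 1 ≤ i → i ≤ n + 1 → 1 ≤ j → j ≤ n + 1 →
      sA (n + 1) j * sA (n + 1) i ^ 2 * (sA (n + 1) j)⁻¹ ∈ genB n ∧
      (sA (n + 1) j)⁻¹ * sA (n + 1) i ^ 2 * sA (n + 1) j ∈ genB n) ∧
    (∀ ω : ArtinA (n + 1) →* Equiv.Perm (Fin (n + 2)),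
      (∀ i : ℕ, 1 ≤ i → i ≤ n + 1 →
        ω (sA (n + 1) i) = Equiv.swap ((i - 1 : ℕ) : Fin (n + 2)) ((i : ℕ) : Fin (n + 2))) →
      ω.ker ≤ genB n) := by
  have part1 : ∀ i : ℕ, 1 ≤ i → i ≤ n + 1 → sA (n + 1) i ^ 2 ∈ genB n := by
    intro i h1 h2
    by_cases hi : i ≤ n
    · exact pow_mem (s_mem i h1 hi) 2
    · rw [show i = n + 1 by omega]
      exact sq_mem
  refine ⟨part1, ?_, ?_⟩
  · intro i j hi1 hi2 hj1 hj2
    by_cases hj : j ≤ n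
    · have hjm := s_mem j hj1 hj
      have hsq := part1 i hi1 hi2
      exact ⟨Subgroup.mul_mem _ (Subgroup.mul_mem _ hjm hsq) (Subgroup.inv_mem _ hjm),
        Subgroup.mul_mem _ (Subgroup.mul_mem _ (Subgroup.inv_mem _ hjm) hsq) hjm⟩
    · have hjn : j = n + 1 := by omega
      subst hjn
      by_cases hi : i + 2 ≤ n + 1
      · have hco : Commute (sA (n+1) i) (sA (n+1) (n+1)) := farComm i (n+1) hi1 hi le_rfl
        have hco2 : Commute (sA (n+1) i ^ 2) (sA (n+1) (n+1)) := hco.pow_left 2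
        have hsq := part1 i hi1 hi2
        constructor
        · have e : sA (n+1) (n+1) * sA (n+1) i ^ 2 * (sA (n+1) (n+1))⁻¹ = sA (n+1) i ^ 2 := by
            rw [← hco2.eq]; group
          rw [e]; exact hsq
        · have e : (sA (n+1) (n+1))⁻¹ * sA (n+1) i ^ 2 * sA (n+1) (n+1) = sA (n+1) i ^ 2 := by
            rw [← hco2.inv_right.eq]; group
          rw [e]; exact hsq
      · by_cases hii : i = n + 1
        · subst hii
          constructor
          · have e : sA (n+1) (n+1) * sA (n+1) (n+1) ^ 2 * (sA (n+1) (n+1))⁻¹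
                = sA (n+1) (n+1) ^ 2 := by simp only [pow_two]; group
            rw [e]; exact sq_mem
          · have e : (sA (n+1) (n+1))⁻¹ * sA (n+1) (n+1) ^ 2 * sA (n+1) (n+1)
                = sA (n+1) (n+1) ^ 2 := by simp only [pow_two]; group
            rw [e]; exact sq_mem
        · have hin : i = n := by omega
          rw [hin] at hi1 ⊢
          have hn1 : 1 ≤ n := hi1
          have hb := braid (n := n) n hn1 le_rfl
          have hmem_n := s_mem (n := n) n hn1 le_rfl
          constructor
          · rw [conj_sq hb]
            exact Subgroup.mul_mem _
              (Subgroup.mul_mem _ (Subgroup.inv_mem _ hmem_n) sq_mem) hmem_n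
          · have hc2 := conj_sq (a := sA (n+1) (n+1)) (b := sA (n+1) n) hb.symm
            -- hc2 : sA n * sA (n+1) ^ 2 * (sA n)⁻¹ = (sA (n+1))⁻¹ * sA n ^ 2 * sA (n+1)
            rw [← hc2]
            exact Subgroup.mul_mem _
              (Subgroup.mul_mem _ hmem_n sq_mem) (Subgroup.inv_mem _ hmem_n)
  · intro ω hω x hx
    have key : ∀ y : ArtinA (n + 1), ∃ k, k ≤ n + 1 ∧ y * (t n k)⁻¹ ∈ genB n := by
      intro y
      have hy : y ∈ Subgroup.closure
          (Set.range (PresentedGroup.of : Fin (n+1) → PresentedGroup (ArtinARels (n+1)))) := by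
        rw [PresentedGroup.closure_range_of]
        exact Subgroup.mem_top y
      induction hy using Subgroup.closure_induction_right with
      | one =>
        refine ⟨n + 1, le_rfl, ?_⟩
        rw [t_top (n := n) (n+1) le_rfl]
        simp
        exact (genB n).one_mem
      | mul_right z hz w hw ih =>
        obtain ⟨a, rfl⟩ := hw
        obtain ⟨k, hk, hzk⟩ := ih
        have hgen : (PresentedGroup.of a : ArtinA (n+1)) = sA (n+1) ((a : ℕ) + 1) := by
          rw [sA_eq ((a : ℕ) + 1) (by omega)]
          exact congrArg _ (Fin.ext (by simp))
        obtain ⟨⟨k', hk', hstep⟩, -⟩ := coset_step ((a : ℕ) + 1) k (by omega) (by omega) hk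
        refine ⟨k', hk', ?_⟩
        have e : z * sA (n+1) ((a : ℕ) + 1) * (t n k')⁻¹
            = (z * (t n k)⁻¹) * (t n k * sA (n+1) ((a : ℕ) + 1) * (t n k')⁻¹) := by group
        rw [hgen]
        change z * sA (n+1) ((a : ℕ) + 1) * (t n k')⁻¹ ∈ genB n
        rw [e]
        exact Subgroup.mul_mem _ hzk hstep
      | mul_inv_cancel z hz w hw ih =>
        obtain ⟨a, rfl⟩ := hw
        obtain ⟨k, hk, hzk⟩ := ih
        have hgen : (PresentedGroup.of a : ArtinA (n+1)) = sA (n+1) ((a : ℕ) + 1) := by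
          rw [sA_eq ((a : ℕ) + 1) (by omega)]
          exact congrArg _ (Fin.ext (by simp))
        obtain ⟨-, ⟨k', hk', hstep⟩⟩ := coset_step ((a : ℕ) + 1) k (by omega) (by omega) hk
        refine ⟨k', hk', ?_⟩
        have e : z * (sA (n+1) ((a : ℕ) + 1))⁻¹ * (t n k')⁻¹
            = (z * (t n k)⁻¹) * (t n k * (sA (n+1) ((a : ℕ) + 1))⁻¹ * (t n k')⁻¹) := by group
        rw [hgen]
        change z * (sA (n+1) ((a : ℕ) + 1))⁻¹ * (t n k')⁻¹ ∈ genB n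
        rw [e]
        exact Subgroup.mul_mem _ hzk hstep
    obtain ⟨k, hk, hmem⟩ := key x
    have hker : ω x = 1 := hx
    have hfix := genB_fix ω hω hmem
    rw [map_mul, map_inv, hker, one_mul] at hfix
    have h2 : ω (t n k) (((n+1 : ℕ)) : Fin (n+2)) = (((n+1 : ℕ)) : Fin (n+2)) := by
      calc ω (t n k) (((n+1 : ℕ)) : Fin (n+2))
          = ω (t n k) ((ω (t n k))⁻¹ (((n+1 : ℕ)) : Fin (n+2))) := by rw [hfix]
      _ = (((n+1 : ℕ)) : Fin (n+2)) := Equiv.apply_symm_apply _ _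
    have h3 := t_apply ω hω (n + 1 - k) k (by omega)
    have h4 : ((k : ℕ) : Fin (n+2)) = (((n+1 : ℕ)) : Fin (n+2)) :=
      (ω (t n k)).injective (h3.trans h2.symm)
    have h5 : k = n + 1 := by
      have hv := congrArg Fin.val h4
      rwa [Fin.val_natCast, Fin.val_natCast, Nat.mod_eq_of_lt (by omega),
        Nat.mod_eq_of_lt (by omega)] at hv
    subst h5
    rw [t_top (n := n) (n+1) le_rfl] at hmem
    simpa using hmem
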